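/- Let p be a positive odd integer and q an even integer coprime to p, and let Δ(t) = 1 + ∑_{i=1}^{p−1} (−1)^i t^{d(i)} ∈ ℤ[t^{±1}], where d(i) = ∑_{k=1}^{i} (−1)^⌊kq/p⌋. Writing Δ(t) = ∑_k a_k t^k, one has a_k = (−1)^k·|a_k| for every k, and ∑_k |a_k| = |Δ(−1)| = p. -/

import Mathlib

open Finset

/-- ε_i = (−1)^⌊iq/p⌋ -/
def eps (p q i : ℤ) : ℤ := ((-1 : ℤˣ) ^ ⌊(i * q : ℚ) / (p : ℚ)⌋ : ℤˣ)

/-- d(i) = ∑_{k=1}^{i} ε_k -/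
noncomputable def dd (p q i : ℤ) : ℤ := ∑ k ∈ Finset.Icc 1 i, eps p q k

/-- The coefficient of t^k in Δ(t) = ∑_{i=0}^{p−1} (−1)^i t^{d(i)} = 1 + ∑_{i=1}^{p−1} (−1)^i t^{d(i)}. -/
noncomputable def aC (p q k : ℤ) : ℤ :=
  ∑ i ∈ Finset.Icc (0 : ℤ) (p - 1), if dd p q i = k then (((-1 : ℤˣ) ^ i : ℤˣ) : ℤ) else 0

lemma zpow_eq_of_even_sub {m n : ℤ} (h : Even (m - n)) :
    ((-1 : ℤˣ) ^ m) = (-1 : ℤˣ) ^ n := by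
  have h1 : ((-1 : ℤˣ)) ^ (m - n) = 1 := h.neg_one_zpow
  calc ((-1 : ℤˣ)) ^ m = ((-1 : ℤˣ)) ^ (m - n + n) := by ring_nf
    _ = ((-1:ℤˣ)) ^ (m-n) * ((-1:ℤˣ))^n := zpow_add _ _ _
    _ = ((-1:ℤˣ))^n := by rw [h1, one_mul]

lemma even_eps_sub_one (p q k : ℤ) : Even (eps p q k - 1) := by
  rcases Int.units_eq_one_or ((-1 : ℤˣ) ^ ⌊(k * q : ℚ) / (p : ℚ)⌋) with h | h <;>
    simp [eps, h]

lemma even_dd_sub (p q i : ℤ) (hi : 0 ≤ i) : Even (dd p q i - i) := by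
  have hs : ∑ k ∈ Finset.Icc (1:ℤ) i, (1:ℤ) = i := by
    rw [Finset.sum_const, Int.card_Icc]
    simp [Int.toNat_of_nonneg hi]
  have : dd p q i - i = ∑ k ∈ Finset.Icc (1:ℤ) i, (eps p q k - 1) := by
    rw [Finset.sum_sub_distrib, hs]; rfl
  rw [this]
  exact Finset.even_sum _ fun k _ => even_eps_sub_one p q k

lemma pow_dd (p q i : ℤ) (hi : 0 ≤ i) : ((-1 : ℤˣ) ^ dd p q i) = (-1 : ℤˣ) ^ i :=
  zpow_eq_of_even_sub (even_dd_sub p q i hi)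

lemma aC_eq (p q k : ℤ) :
    aC p q k = (((-1 : ℤˣ) ^ k : ℤˣ) : ℤ) *
      ((Finset.Icc (0 : ℤ) (p - 1)).filter (fun i => dd p q i = k)).card := by
  unfold aC
  rw [Finset.sum_congr rfl (g := fun i =>
      if dd p q i = k then (((-1 : ℤˣ) ^ k : ℤˣ) : ℤ) else 0)]
  · rw [← Finset.sum_filter, Finset.sum_const, nsmul_eq_mul, mul_comm]
  · intro i hi
    split_ifs with h
    · congr 1
      rw [← h, pow_dd p q i (Finset.mem_Icc.mp hi).1]
    · rfl

lemma abs_aC (p q k : ℤ) :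
    |aC p q k| = ((Finset.Icc (0 : ℤ) (p - 1)).filter (fun i => dd p q i = k)).card := by
  rw [aC_eq, abs_mul]
  rcases Int.units_eq_one_or ((-1 : ℤˣ) ^ k) with h | h <;> simp [h]

theorem stmt18 (p q : ℤ) (hp : 0 < p) (hpodd : Odd p) (hqeven : Even q)
    (hcop : IsCoprime p q) :
    (∀ k : ℤ, aC p q k = (((-1 : ℤˣ) ^ k : ℤˣ) : ℤ) * |aC p q k|) ∧
    (∑ k ∈ (Finset.Icc (0 : ℤ) (p - 1)).image (dd p q), |aC p q k|
      = |∑ i ∈ Finset.Icc (0 : ℤ) (p - 1),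
          (((-1 : ℤˣ) ^ i : ℤˣ) : ℤ) * (((-1 : ℤˣ) ^ dd p q i : ℤˣ) : ℤ)|) ∧
    (∑ k ∈ (Finset.Icc (0 : ℤ) (p - 1)).image (dd p q), |aC p q k| = p) := by
  have hcard : ((Finset.Icc (0 : ℤ) (p - 1)).card : ℤ) = p := by
    rw [Int.card_Icc]; omega
  have hsum : ∑ k ∈ (Finset.Icc (0 : ℤ) (p - 1)).image (dd p q), |aC p q k| = p := by
    have := Finset.card_eq_sum_card_image (dd p q) (Finset.Icc (0 : ℤ) (p - 1))
    calc ∑ k ∈ (Finset.Icc (0 : ℤ) (p - 1)).image (dd p q), |aC p q k|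
        = ∑ k ∈ (Finset.Icc (0 : ℤ) (p - 1)).image (dd p q),
            (((Finset.Icc (0 : ℤ) (p - 1)).filter (fun i => dd p q i = k)).card : ℤ) := by
          exact Finset.sum_congr rfl fun k _ => abs_aC p q k
      _ = ((Finset.Icc (0 : ℤ) (p - 1)).card : ℤ) := by
          rw [this]; push_cast; ring
      _ = p := hcard
  refine ⟨fun k => ?_, ?_, hsum⟩
  · rw [abs_aC, aC_eq]
  · rw [hsum]
    have : ∑ i ∈ Finset.Icc (0 : ℤ) (p - 1),
        (((-1 : ℤˣ) ^ i : ℤˣ) : ℤ) * (((-1 : ℤˣ) ^ dd p q i : ℤˣ) : ℤ) = p := by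
      rw [Finset.sum_congr rfl (g := fun _ => (1 : ℤ))]
      · rw [Finset.sum_const, nsmul_eq_mul, mul_one, hcard]
      · intro i hi
        rw [pow_dd p q i (Finset.mem_Icc.mp hi).1, ← Units.val_mul, ← zpow_add]
        rcases Int.units_eq_one_or ((-1 : ℤˣ) ^ (i + i)) with h | h
        · rw [h]; rfl
        · exfalso
          have : Even (i + i) := ⟨i, rfl⟩
          rw [this.neg_one_zpow] at h
          exact absurd h (by decide)
    rw [this, abs_of_pos hp]
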